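/- (Perturbation bound for discrete Lyapunov solutions, from the proof of Theorem 2) Let M₁, M₂ ∈ ℝ^{n×n} satisfy ‖Mᵢ^F‖ ≤ m p^F for all nonnegative integers F and i = 1,2, with m ≥ 1 and 0 ≤ p < 1, and suppose ‖Mᵢ‖ ≤ L and ‖M₂ − M₁‖ ≤ κ. Let Q₁, Q₂ be the corresponding solutions of the discrete Lyapunov equations MᵢᵀQᵢMᵢ − Qᵢ = −Iₙ. Then the difference satisfies the Lyapunov equation M₂ᵀ(Q₂ − Q₁)M₂ − (Q₂ − Q₁) = −[(M₂ − M₁)ᵀQ₁M₂ + M₁ᵀQ₁(M₂ − M₁)], and consequently ‖Q₂ − Q₁‖ ≤ 2κ L m⁴/(1 − p²)². -/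

import Mathlib

open Matrix Finset
set_option synthInstance.maxHeartbeats 1000000
set_option maxHeartbeats 1000000

/-- Spectral (induced Euclidean) norm of a real matrix. -/
noncomputable def specNorm {n : ℕ} (M : Matrix (Fin n) (Fin n) ℝ) : ℝ :=
  ‖Matrix.toEuclideanCLM (𝕜 := ℝ) (n := Fin n) M‖

lemma sp_nonneg {n} (M : Matrix (Fin n) (Fin n) ℝ) : 0 ≤ specNorm M := norm_nonneg _
lemma sp_mul {n} (A B : Matrix (Fin n) (Fin n) ℝ) : specNorm (A*B) ≤ specNorm A * specNorm B := by
  simp only [specNorm, _root_.map_mul]; exact norm_mul_le _ _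
lemma sp_tr {n} (A : Matrix (Fin n) (Fin n) ℝ) : specNorm Aᵀ = specNorm A := by
  have h : Aᵀ = star A := by
    simp only [Matrix.star_eq_conjTranspose]
    ext i j; simp [Matrix.conjTranspose_apply]
  rw [h, specNorm, map_star, ContinuousLinearMap.star_eq_adjoint]
  exact LinearIsometryEquiv.norm_map (ContinuousLinearMap.adjoint) _
lemma sp_one {n} : specNorm (1 : Matrix (Fin n) (Fin n) ℝ) ≤ 1 := by
  simp only [specNorm, _root_.map_one]
  rw [ContinuousLinearMap.one_def]
  exact ContinuousLinearMap.norm_id_le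
lemma sp_add {n} (A B : Matrix (Fin n) (Fin n) ℝ) :
    specNorm (A+B) ≤ specNorm A + specNorm B := by
  simp only [specNorm, map_add]; exact norm_add_le _ _
lemma sp_sum {n} {s : Finset ℕ} (f : ℕ → Matrix (Fin n) (Fin n) ℝ) :
    specNorm (∑ j ∈ s, f j) ≤ ∑ j ∈ s, specNorm (f j) := by
  simp only [specNorm, map_sum]; exact norm_sum_le _ _

lemma geoms (r : ℝ) (h0 : 0 ≤ r) (h1 : r < 1) (N : ℕ) :
    ∑ i ∈ Finset.range N, r ^ i ≤ 1 / (1 - r) := by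
  have h2 : 0 < 1 - r := by linarith
  rw [le_div_iff₀ h2]
  have := geom_sum_mul r N
  nlinarith [pow_nonneg h0 N]

lemma lyap_iter {n : ℕ} (A X C : Matrix (Fin n) (Fin n) ℝ)
    (h : Aᵀ * X * A - X = -C) (N : ℕ) :
    X = (∑ j ∈ Finset.range N, (Aᵀ)^j * C * A^j) + (Aᵀ)^N * X * A^N := by
  have hX : X = C + Aᵀ * X * A := by
    have h' : Aᵀ * X * A = -C + X := by rw [← h]; abel
    rw [h']; abel
  induction N with
  | zero => simp
  | succ N ih =>
    have tail : (Aᵀ)^N * X * A^N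
        = (Aᵀ)^N * C * A^N + (Aᵀ)^(N+1) * X * A^(N+1) := by
      conv_lhs => rw [hX]
      simp only [pow_succ]
      noncomm_ring
      simp [← pow_succ, ← pow_succ']
    rw [Finset.sum_range_succ]
    calc X = (∑ j ∈ Finset.range N, (Aᵀ)^j * C * A^j) + (Aᵀ)^N * X * A^N := ih
      _ = _ := by rw [tail]; abel

lemma lyap_bound {n : ℕ} (A X C : Matrix (Fin n) (Fin n) ℝ) (m p : ℝ)
    (hm : 1 ≤ m) (hp0 : 0 ≤ p) (hp1 : p < 1)
    (hpow : ∀ F : ℕ, specNorm (A ^ F) ≤ m * p ^ F)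
    (h : Aᵀ * X * A - X = -C) :
    specNorm X ≤ m ^ 2 / (1 - p ^ 2) * specNorm C := by
  have hp2 : p ^ 2 < 1 := by nlinarith
  have hp2' : (0:ℝ) < 1 - p ^ 2 := by linarith
  have hCn := sp_nonneg C
  have hXn := sp_nonneg X
  -- conjugation bound
  have hconj : ∀ (Y : Matrix (Fin n) (Fin n) ℝ) (j : ℕ),
      specNorm ((Aᵀ)^j * Y * A^j) ≤ m^2 * (p^2)^j * specNorm Y := by
    intro Y j
    have h1 : specNorm ((Aᵀ)^j * Y * A^j) ≤ specNorm ((Aᵀ)^j) * specNorm Y * specNorm (A^j) :=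
      le_trans (sp_mul _ _) (by
        have := sp_mul ((Aᵀ)^j) Y
        nlinarith [sp_nonneg (A^j), sp_nonneg ((Aᵀ)^j * Y)])
    have h2 : specNorm ((Aᵀ)^j) = specNorm (A^j) := by
      rw [← Matrix.transpose_pow, sp_tr]
    have h3 := hpow j
    have h4 := sp_nonneg (A^j)
    have h5 := sp_nonneg Y
    have hppow : (0:ℝ) ≤ p ^ j := pow_nonneg hp0 j
    calc specNorm ((Aᵀ)^j * Y * A^j)
          ≤ specNorm ((Aᵀ)^j) * specNorm Y * specNorm (A^j) := h1
      _ = specNorm (A^j) * specNorm Y * specNorm (A^j) := by rw [h2]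
      _ ≤ m^2 * (p^2)^j * specNorm Y := by
            rw [show ((p:ℝ)^2)^j = (p^j)^2 by ring]
            have hsq : specNorm (A^j) * specNorm (A^j) ≤ (m * p^j) * (m * p^j) :=
              mul_le_mul h3 h3 h4 (by positivity)
            nlinarith [mul_le_mul_of_nonneg_right hsq h5]
  -- per-N bound
  have hN : ∀ N : ℕ, specNorm X ≤ m^2/(1-p^2) * specNorm C + m^2 * (p^2)^N * specNorm X := by
    intro N
    have hit := lyap_iter A X C h N
    have hb1 : specNorm X ≤ (∑ j ∈ Finset.range N, specNorm ((Aᵀ)^j * C * A^j))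
        + specNorm ((Aᵀ)^N * X * A^N) := by
      conv_lhs => rw [hit]
      exact le_trans (sp_add _ _) (add_le_add (sp_sum _) le_rfl)
    have hb2 : (∑ j ∈ Finset.range N, specNorm ((Aᵀ)^j * C * A^j))
        ≤ ∑ j ∈ Finset.range N, m^2 * (p^2)^j * specNorm C :=
      Finset.sum_le_sum fun j _ => hconj C j
    have hb3 : (∑ j ∈ Finset.range N, m^2 * (p^2)^j * specNorm C)
        = m^2 * specNorm C * ∑ j ∈ Finset.range N, (p^2)^j := by
      rw [Finset.mul_sum]; exact Finset.sum_congr rfl fun j _ => by ring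
    have hb4 := geoms (p^2) (by positivity) hp2 N
    have hb5 : m^2 * specNorm C * (∑ j ∈ Finset.range N, (p^2)^j)
        ≤ m^2/(1-p^2) * specNorm C := by
      have hms : (0:ℝ) ≤ m^2 * specNorm C := by positivity
      calc m^2 * specNorm C * (∑ j ∈ Finset.range N, (p^2)^j)
          ≤ m^2 * specNorm C * (1/(1-p^2)) := by
            exact mul_le_mul_of_nonneg_left hb4 hms
        _ = m^2/(1-p^2) * specNorm C := by field_simp
    have := hconj X N
    calc specNorm X ≤ _ := hb1
      _ ≤ m^2/(1-p^2) * specNorm C + m^2 * (p^2)^N * specNorm X := by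
          exact add_le_add (le_trans hb2 (le_trans (le_of_eq hb3) hb5)) this
  -- take the limit
  have hlim : Filter.Tendsto
      (fun N : ℕ => m^2/(1-p^2) * specNorm C + m^2 * (p^2)^N * specNorm X)
      Filter.atTop (nhds (m^2/(1-p^2) * specNorm C)) := by
    have h0 : Filter.Tendsto (fun N : ℕ => ((p:ℝ)^2)^N) Filter.atTop (nhds 0) :=
      tendsto_pow_atTop_nhds_zero_of_lt_one (by positivity) hp2
    have : Filter.Tendsto (fun N : ℕ => m^2 * (p^2)^N * specNorm X) Filter.atTop (nhds 0) := by
      have := (h0.const_mul (m^2)).mul_const (specNorm X)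
      simpa using this
    simpa using Filter.Tendsto.add tendsto_const_nhds this
  exact ge_of_tendsto' hlim hN

lemma sp3 {n} (A B C : Matrix (Fin n) (Fin n) ℝ) :
    specNorm (A*B*C) ≤ specNorm A * specNorm B * specNorm C :=
  le_trans (sp_mul _ _) (mul_le_mul_of_nonneg_right (sp_mul A B) (sp_nonneg C))

/-- Perturbation bound for discrete Lyapunov solutions, from the proof of Theorem 2:
if `‖Mᵢ^F‖ ≤ m p^F`, `‖Mᵢ‖ ≤ L`, `‖M₂ − M₁‖ ≤ κ`, and `Qᵢ` solve
`MᵢᵀQᵢMᵢ − Qᵢ = −Iₙ`, then `Q₂ − Q₁` satisfies the Lyapunov equation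
`M₂ᵀ(Q₂ − Q₁)M₂ − (Q₂ − Q₁) = −[(M₂ − M₁)ᵀQ₁M₂ + M₁ᵀQ₁(M₂ − M₁)]`
and `‖Q₂ − Q₁‖ ≤ 2κLm⁴/(1 − p²)²`. -/
theorem discrete_lyapunov_perturbation
    (n : ℕ) (M₁ M₂ Q₁ Q₂ : Matrix (Fin n) (Fin n) ℝ)
    (m p L κ : ℝ) (hm : 1 ≤ m) (hp0 : 0 ≤ p) (hp1 : p < 1)
    (hpow1 : ∀ F : ℕ, specNorm (M₁ ^ F) ≤ m * p ^ F)
    (hpow2 : ∀ F : ℕ, specNorm (M₂ ^ F) ≤ m * p ^ F)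
    (hL1 : specNorm M₁ ≤ L) (hL2 : specNorm M₂ ≤ L)
    (hκ : specNorm (M₂ - M₁) ≤ κ)
    (hQ1 : M₁ᵀ * Q₁ * M₁ - Q₁ = -1)
    (hQ2 : M₂ᵀ * Q₂ * M₂ - Q₂ = -1) :
    (M₂ᵀ * (Q₂ - Q₁) * M₂ - (Q₂ - Q₁) =
      -((M₂ - M₁)ᵀ * Q₁ * M₂ + M₁ᵀ * Q₁ * (M₂ - M₁))) ∧
    specNorm (Q₂ - Q₁) ≤ 2 * κ * L * m ^ 4 / (1 - p ^ 2) ^ 2 := by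
  have hp2 : p ^ 2 < 1 := by nlinarith
  have hp2' : (0:ℝ) < 1 - p ^ 2 := by linarith
  have hκ0 : 0 ≤ κ := le_trans (sp_nonneg _) hκ
  have hL0 : 0 ≤ L := le_trans (sp_nonneg _) hL2
  have e1 := sub_eq_iff_eq_add.mp hQ1
  have e2 := sub_eq_iff_eq_add.mp hQ2
  have part1 : M₂ᵀ * (Q₂ - Q₁) * M₂ - (Q₂ - Q₁) =
      -((M₂ - M₁)ᵀ * Q₁ * M₂ + M₁ᵀ * Q₁ * (M₂ - M₁)) := by
    simp only [Matrix.transpose_sub, Matrix.sub_mul, Matrix.mul_sub]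
    rw [e1, e2]
    abel
  refine ⟨part1, ?_⟩
  set q : ℝ := m ^ 2 / (1 - p ^ 2) with hq
  have hq0 : 0 ≤ q := by positivity
  -- bound on Q₁
  have hQ1b : specNorm Q₁ ≤ q := by
    have h1 : M₁ᵀ * Q₁ * M₁ - Q₁ = -(1 : Matrix (Fin n) (Fin n) ℝ) := hQ1
    have := lyap_bound M₁ Q₁ 1 m p hm hp0 hp1 hpow1 h1
    calc specNorm Q₁ ≤ q * specNorm (1 : Matrix (Fin n) (Fin n) ℝ) := this
      _ ≤ q * 1 := mul_le_mul_of_nonneg_left sp_one hq0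
      _ = q := mul_one q
  -- bound on C
  set C : Matrix (Fin n) (Fin n) ℝ :=
    (M₂ - M₁)ᵀ * Q₁ * M₂ + M₁ᵀ * Q₁ * (M₂ - M₁) with hCdef
  have hC : specNorm C ≤ 2 * κ * L * q := by
    have t1 : specNorm ((M₂ - M₁)ᵀ * Q₁ * M₂) ≤ κ * q * L := by
      calc specNorm ((M₂ - M₁)ᵀ * Q₁ * M₂)
          ≤ specNorm ((M₂ - M₁)ᵀ) * specNorm Q₁ * specNorm M₂ := sp3 _ _ _
        _ = specNorm (M₂ - M₁) * specNorm Q₁ * specNorm M₂ := by rw [sp_tr]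
        _ ≤ κ * q * L :=
            mul_le_mul (mul_le_mul hκ hQ1b (sp_nonneg _) hκ0) hL2 (sp_nonneg _)
              (by positivity)
    have t2 : specNorm (M₁ᵀ * Q₁ * (M₂ - M₁)) ≤ L * q * κ := by
      calc specNorm (M₁ᵀ * Q₁ * (M₂ - M₁))
          ≤ specNorm (M₁ᵀ) * specNorm Q₁ * specNorm (M₂ - M₁) := sp3 _ _ _
        _ = specNorm M₁ * specNorm Q₁ * specNorm (M₂ - M₁) := by rw [sp_tr]
        _ ≤ L * q * κ :=
            mul_le_mul (mul_le_mul hL1 hQ1b (sp_nonneg _) hL0) hκ (sp_nonneg _)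
              (by positivity)
    calc specNorm C ≤ specNorm ((M₂ - M₁)ᵀ * Q₁ * M₂) + specNorm (M₁ᵀ * Q₁ * (M₂ - M₁)) :=
          sp_add _ _
      _ ≤ κ * q * L + L * q * κ := add_le_add t1 t2
      _ = 2 * κ * L * q := by ring
  -- bound on Q₂ - Q₁
  have hD : specNorm (Q₂ - Q₁) ≤ q * specNorm C := by
    have h2 : M₂ᵀ * (Q₂ - Q₁) * M₂ - (Q₂ - Q₁) = -C := part1
    exact lyap_bound M₂ (Q₂ - Q₁) C m p hm hp0 hp1 hpow2 h2
  calc specNorm (Q₂ - Q₁) ≤ q * specNorm C := hD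
    _ ≤ q * (2 * κ * L * q) := mul_le_mul_of_nonneg_left hC hq0
    _ = 2 * κ * L * m ^ 4 / (1 - p ^ 2) ^ 2 := by
        rw [hq]; field_simp
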